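/- Let K be a field of characteristic 0 and A = K[q,q⁻¹][[p]] (Laurent polynomials in q₁,…,qₙ, formal power series in p₁,…,pₙ) with Poisson bracket {pⱼ,qₖ} = qₖ δⱼₖ. If H ∈ K[[p]] has frequency vector ω = (∂H/∂p₁(0),…,∂H/∂pₙ(0)) that is non-resonant (i.e. (ω,I) ≠ 0 for all nonzero I ∈ ℤⁿ), then the kernel of the K[[p]]-linear operator {H,−} : A → A is K[[p]], and its image is the K[[p]]-submodule generated by the monomials q^I with I ≠ 0. -/

import Mathlib

/-- The partial derivative `∂H/∂p_i` of a formal power series `H ∈ K[[p_1,…,p_n]]`. -/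
noncomputable def pDeriv {n : ℕ} (K : Type*) [Field K] (i : Fin n)
    (H : MvPowerSeries (Fin n) K) : MvPowerSeries (Fin n) K :=
  fun J => (J i + 1 : ℕ) • MvPowerSeries.coeff (J + Finsupp.single i 1) H

/-- The Hamiltonian operator `{H, -}` on `A = K[q,q⁻¹][[p]]`, where an element of
`A` is encoded as a finitely supported family over the Laurent exponents
`I ∈ ℤⁿ` with coefficients in `K[[p]]`; the Poisson bracket `{p_j,q_k} = q_k δ_{jk}`
gives `{H, q^I g(p)} = (Σ_i I_i ∂H/∂p_i) q^I g(p)`. -/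
noncomputable def hamOp {n : ℕ} (K : Type*) [Field K] (H : MvPowerSeries (Fin n) K)
    (a : (Fin n →₀ ℤ) →₀ MvPowerSeries (Fin n) K) :
    (Fin n →₀ ℤ) →₀ MvPowerSeries (Fin n) K :=
  a.sum fun I r => Finsupp.single I ((∑ i : Fin n, (I i) • pDeriv K i H) * r)

lemma hamOp_apply {n : ℕ} (K : Type*) [Field K] (H : MvPowerSeries (Fin n) K)
    (a : (Fin n →₀ ℤ) →₀ MvPowerSeries (Fin n) K) (J : Fin n →₀ ℤ) :
    hamOp K H a J = (∑ i : Fin n, (J i) • pDeriv K i H) * a J := by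
  classical
  rw [hamOp, Finsupp.sum_apply, Finsupp.sum]
  rw [Finset.sum_eq_single J]
  · simp
  · intro I _ hIJ; simp [Finsupp.single_apply, hIJ]
  · intro h; simp [Finsupp.notMem_support_iff.mp h]

lemma constCoeff_freq {n : ℕ} (K : Type*) [Field K] (H : MvPowerSeries (Fin n) K)
    (I : Fin n →₀ ℤ) :
    MvPowerSeries.constantCoeff (∑ i : Fin n, (I i) • pDeriv K i H)
      = ∑ i : Fin n, (I i : K) * MvPowerSeries.coeff (Finsupp.single i 1) H := by
  rw [map_sum]
  refine Finset.sum_congr rfl fun i _ => ?_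
  rw [map_zsmul]
  have : MvPowerSeries.constantCoeff (pDeriv K i H)
      = MvPowerSeries.coeff (Finsupp.single i 1) H := by
    show pDeriv K i H 0 = _
    simp [pDeriv]
  rw [this, zsmul_eq_mul]

theorem stmt_14 {n : ℕ} {K : Type*} [Field K] [CharZero K]
    (H : MvPowerSeries (Fin n) K)
    (hres : ∀ I : Fin n →₀ ℤ, I ≠ 0 →
      (∑ i : Fin n, (I i : K) * MvPowerSeries.coeff (Finsupp.single i 1) H) ≠ 0) :
    -- the kernel of {H,-} is K[[p]], i.e. the elements supported at I = 0
    (∀ a : (Fin n →₀ ℤ) →₀ MvPowerSeries (Fin n) K,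
      hamOp K H a = 0 ↔ ∀ I : Fin n →₀ ℤ, I ≠ 0 → a I = 0) ∧
    -- the image of {H,-} is the K[[p]]-module generated by the q^I, I ≠ 0,
    -- i.e. the elements with vanishing average (zero coefficient at I = 0)
    (∀ b : (Fin n →₀ ℤ) →₀ MvPowerSeries (Fin n) K,
      (∃ a, hamOp K H a = b) ↔ b 0 = 0) := by
  classical
  set c : (Fin n →₀ ℤ) → MvPowerSeries (Fin n) K :=
    fun I => ∑ i : Fin n, (I i) • pDeriv K i H with hc
  have hc0 : c 0 = 0 := by simp [hc]
  have hunit : ∀ I : Fin n →₀ ℤ, I ≠ 0 → IsUnit (c I) := by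
    intro I hI
    rw [MvPowerSeries.isUnit_iff_constantCoeff, hc, constCoeff_freq]
    exact (hres I hI).isUnit
  constructor
  · intro a
    constructor
    · intro h I hI
      have h' : c I * a I = 0 := by
        rw [← hamOp_apply, h]; rfl
      rcases mul_eq_zero.mp h' with h'' | h''
      · exact absurd h'' (hunit I hI).ne_zero
      · exact h''
    · intro h
      refine Finsupp.ext fun J => ?_
      rw [hamOp_apply, Finsupp.coe_zero, Pi.zero_apply]
      by_cases hJ : J = 0
      · subst hJ; simp
      · rw [h J hJ, mul_zero]
  · intro b
    constructor
    · rintro ⟨a, rfl⟩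
      rw [hamOp_apply]; simp
    · intro hb
      refine ⟨Finsupp.onFinset b.support
        (fun J => if h : J = 0 then 0 else (((hunit J h).unit⁻¹ : _) : MvPowerSeries (Fin n) K) * b J)
        (fun J hJ => ?_), ?_⟩
      · rw [Finsupp.mem_support_iff]
        intro hbJ
        apply hJ
        by_cases h : J = 0 <;> simp [h, hbJ]
      · refine Finsupp.ext fun J => ?_
        rw [hamOp_apply, Finsupp.onFinset_apply]
        by_cases hJ : J = 0
        · subst hJ; simp [hb]
        · rw [dif_neg hJ, ← mul_assoc]
          have hcu : (∑ i : Fin n, (J i) • pDeriv K i H)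
              = ((hunit J hJ).unit : MvPowerSeries (Fin n) K) :=
            ((hunit J hJ).unit_spec).symm
          rw [hcu, Units.mul_inv, one_mul]
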